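/- Let p > 0 and Δp be reals with p' := p + Δp > 0, and let x, x', x̄, w̃ be reals with s := p·x and s' := p'·x'. Suppose Δp, x̄ − w̃, x − w̃ and x' − w̃ are all strictly positive, or all strictly negative. Then p'·|x' − w̃| − p·(max{x̄, x, w̃} − min{x̄, x, w̃}) ≤ sign(Δp)·(s' − s) − w̃·|Δp|. -/
import Mathlib


/-- Case 1 of Lemma 14 (change of the potential's leading term at a price
update when the sign of `x − w̃` is not flipped and `x` moves towards `w̃`):
if `Δp`, `x̄ − w̃`, `x − w̃`, `x' − w̃` are all strictly positive, or all
strictly negative, then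
`p'·|x' − w̃| − p·span{x̄, x, w̃} ≤ sign(Δp)·(s' − s) − w̃·|Δp|`. -/
theorem stmt16 (p Δp p' x x' xbar wtil s s' : ℝ)
    (hp : 0 < p) (hp'def : p' = p + Δp) (hp' : 0 < p')
    (hs : s = p * x) (hs' : s' = p' * x')
    (hsigns : (0 < Δp ∧ 0 < xbar - wtil ∧ 0 < x - wtil ∧ 0 < x' - wtil) ∨
      (Δp < 0 ∧ xbar - wtil < 0 ∧ x - wtil < 0 ∧ x' - wtil < 0)) :
    p' * |x' - wtil| - p * (max xbar (max x wtil) - min xbar (min x wtil)) ≤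
      Real.sign Δp * (s' - s) - wtil * |Δp| := by
  have hmax : x ≤ max xbar (max x wtil) := le_max_of_le_right (le_max_left _ _)
  have hmax' : wtil ≤ max xbar (max x wtil) := le_max_of_le_right (le_max_right _ _)
  have hmin : min xbar (min x wtil) ≤ wtil := min_le_of_right_le (min_le_right _ _)
  have hmin' : min xbar (min x wtil) ≤ x := min_le_of_right_le (min_le_left _ _)
  subst hp'def hs hs'
  rcases hsigns with ⟨h1, h2, h3, h4⟩ | ⟨h1, h2, h3, h4⟩
  · rw [Real.sign_of_pos h1, abs_of_pos h1, abs_of_pos h4]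
    have key : p * (x - wtil) ≤ p * (max xbar (max x wtil) - min xbar (min x wtil)) := by
      apply mul_le_mul_of_nonneg_left _ hp.le
      linarith
    nlinarith [key]
  · rw [Real.sign_of_neg h1, abs_of_neg h1, abs_of_neg h4]
    have key : p * (wtil - x) ≤ p * (max xbar (max x wtil) - min xbar (min x wtil)) := by
      apply mul_le_mul_of_nonneg_left _ hp.le
      linarith
    nlinarith [key]
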